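/- arXiv:2012.10817 — 2 statements merged into one kernel-verified Lean document; each statement's English description precedes it below -/
import Mathlib

section
/- Let A be an abelian category, (X,Y) a GP-admissible pair in A with X ∩ Y = Proj(A), and (Z,W) a GI-admissible pair in A with Z ∩ W = Inj(A). Then GP_{(X,Y)} ⊥ Inj(A)^∨, i.e. Ext^i_A(G, N) = 0 for every G ∈ GP_{(X,Y)}, every N of finite Inj(A)-coresolution dimension, and every i > 0. -/
open CategoryTheory CategoryTheory.Limits

universe w v u

namespace RelativeGorenstein

variable {C : Type u} [Category.{v} C] [Abelian C]

section ExtDefs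

variable [HasExt.{w} C]

/-- Vanishing of the `i`-th Ext group `Ext^i(M, N) = 0`. -/
def extZero (M N : C) (i : ℕ) : Prop :=
  Subsingleton (Abelian.Ext.{w} M N i)

/-- The projective dimension, `pd M := min {n : Ext^j(M, -) = 0 for all j > n}`, as an
element of `ℕ∞` (with value `⊤` if no such `n` exists). -/
noncomputable def pd (M : C) : ℕ∞ :=
  sInf {n : ℕ∞ | ∃ m : ℕ, n = (m : ℕ∞) ∧ ∀ (N : C) (j : ℕ), m < j → extZero.{w} M N j}

/-- The injective dimension, `id N := min {n : Ext^j(-, N) = 0 for all j > n}`, as an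
element of `ℕ∞`. -/
noncomputable def idim (N : C) : ℕ∞ :=
  sInf {n : ℕ∞ | ∃ m : ℕ, n = (m : ℕ∞) ∧ ∀ (M : C) (j : ℕ), m < j → extZero.{w} M N j}

/-- The projective dimension of a class of objects. -/
noncomputable def pdClass (S : Set C) : ℕ∞ := ⨆ M ∈ S, pd.{w} M

/-- The injective dimension of a class of objects. -/
noncomputable def idClass (S : Set C) : ℕ∞ := ⨆ N ∈ S, idim.{w} N

end ExtDefs

/-- The class of projective objects. -/
def projClass (C : Type u) [Category.{v} C] [Abelian C] : Set C := {P | Projective P}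

/-- The class of injective objects. -/
def injClass (C : Type u) [Category.{v} C] [Abelian C] : Set C := {I | Injective I}

/-- An exact (acyclic) complex. -/
def Acyclic (P : CochainComplex C ℤ) : Prop := ∀ i, P.ExactAt i

/-- The complex `Hom_A(P•, Y)` obtained by applying `Hom_A(-, Y)` to a complex `P•`. -/
noncomputable def homOutComplex (P : CochainComplex C ℤ) (Y : C) :=
  ((preadditiveYoneda.obj Y).mapHomologicalComplex _).obj P.op

/-- The complex `Hom_A(P•, Y)` is exact. -/
def HomOutExact (P : CochainComplex C ℤ) (Y : C) : Prop :=
  ∀ i, (homOutComplex P Y).ExactAt i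

/-- The complex `Hom_A(Z, I•)` obtained by applying `Hom_A(Z, -)` to a complex `I•`. -/
noncomputable def homInComplex (Z : C) (I : CochainComplex C ℤ) :=
  ((preadditiveCoyoneda.obj (Opposite.op Z)).mapHomologicalComplex _).obj I

/-- The complex `Hom_A(Z, I•)` is exact. -/
def HomInExact (Z : C) (I : CochainComplex C ℤ) : Prop :=
  ∀ i, (homInComplex Z I).ExactAt i

/-- The class `GP_(X,Y)` of `(X,Y)`-Gorenstein projective objects: cycles of exact
complexes with terms in `X` that stay exact after applying `Hom_A(-, Y)` for every `Y ∈ Y`. -/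
def gpClass (X Y : Set C) : Set C :=
  {M | ∃ (P : CochainComplex C ℤ) (i : ℤ),
    (∀ n, P.X n ∈ X) ∧ Acyclic P ∧ (∀ B ∈ Y, HomOutExact P B) ∧
    Nonempty (M ≅ P.cycles i)}

/-- The class `GI_(Z,W)` of `(Z,W)`-Gorenstein injective objects: cycles of exact
complexes with terms in `W` that stay exact after applying `Hom_A(Z, -)` for every `Z ∈ Z`. -/
def giClass (Z W : Set C) : Set C :=
  {M | ∃ (I : CochainComplex C ℤ) (i : ℤ),
    (∀ n, I.X n ∈ W) ∧ Acyclic I ∧ (∀ A ∈ Z, HomInExact A I) ∧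
    Nonempty (M ≅ I.cycles i)}

/-- `ResDimLE G n M` : `M` admits a `G`-resolution of length at most `n`,
`0 → G_m → ⋯ → G_0 → M → 0` with all `G_i ∈ G` and `m ≤ n`. -/
def ResDimLE (G : Set C) : ℕ → C → Prop
  | 0, M => M ∈ G
  | n + 1, M => M ∈ G ∨ ∃ (K G₀ : C) (i : K ⟶ G₀) (p : G₀ ⟶ M) (w : i ≫ p = 0),
      (ShortComplex.mk i p w).ShortExact ∧ G₀ ∈ G ∧ ResDimLE G n K

/-- `CoresDimLE G n M` : `M` admits a `G`-coresolution of length at most `n`,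
`0 → M → G^0 → ⋯ → G^m → 0` with all `G^i ∈ G` and `m ≤ n`. -/
def CoresDimLE (G : Set C) : ℕ → C → Prop
  | 0, M => M ∈ G
  | n + 1, M => M ∈ G ∨ ∃ (G₀ K : C) (i : M ⟶ G₀) (p : G₀ ⟶ K) (w : i ≫ p = 0),
      (ShortComplex.mk i p w).ShortExact ∧ G₀ ∈ G ∧ CoresDimLE G n K

/-- The `G`-resolution dimension of `M`, as an element of `ℕ∞`. -/
noncomputable def resDim (G : Set C) (M : C) : ℕ∞ :=
  sInf {n : ℕ∞ | ∃ m : ℕ, n = (m : ℕ∞) ∧ ResDimLE G m M}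

/-- The `G`-coresolution dimension of `M`, as an element of `ℕ∞`. -/
noncomputable def coresDim (G : Set C) (M : C) : ℕ∞ :=
  sInf {n : ℕ∞ | ∃ m : ℕ, n = (m : ℕ∞) ∧ CoresDimLE G m M}

/-- The `(X,Y)`-Gorenstein projective dimension of `M`. -/
noncomputable def gpd (X Y : Set C) (M : C) : ℕ∞ := resDim (gpClass X Y) M

/-- The `(Z,W)`-Gorenstein injective dimension of `M`. -/
noncomputable def gid (Z W : Set C) (M : C) : ℕ∞ := coresDim (giClass Z W) M

variable (C) in
/-- The global `(X,Y)`-Gorenstein projective dimension of `A`. -/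
noncomputable def glGPD (X Y : Set C) : ℕ∞ := ⨆ M : C, gpd X Y M

variable (C) in
/-- The global `(Z,W)`-Gorenstein injective dimension of `A`. -/
noncomputable def glGID (Z W : Set C) : ℕ∞ := ⨆ M : C, gid Z W M

variable (C) in
/-- `Proj(A)^∧_n`, the class of objects of projective resolution dimension at most `n`. -/
def projWedge (n : ℕ) : Set C := {M | ResDimLE (projClass C) n M}

variable (C) in
/-- `Inj(A)^∨_n`, the class of objects of injective coresolution dimension at most `n`. -/
def injVee (n : ℕ) : Set C := {M | CoresDimLE (injClass C) n M}

variable (C) in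
/-- `Inj(A)^∨`, the class of objects of finite injective coresolution dimension. -/
def injVeeFin : Set C := {M | ∃ n : ℕ, CoresDimLE (injClass C) n M}

variable (C) in
/-- `Proj(A)^∧`, the class of objects of finite projective resolution dimension. -/
def projWedgeFin : Set C := {M | ∃ n : ℕ, ResDimLE (projClass C) n M}

section Admissible

variable [HasExt.{w} C]

/-- `(X,Y)` is a GP-admissible pair. -/
structure IsGPAdmissible (X Y : Set C) : Prop where
  exists_epi : ∀ A : C, ∃ (X₀ : C) (f : X₀ ⟶ A), X₀ ∈ X ∧ Epi f
  coprod_closed_left : ∀ {A B : C}, A ∈ X → B ∈ X → (A ⊞ B) ∈ X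
  coprod_closed_right : ∀ {A B : C}, A ∈ Y → B ∈ Y → (A ⊞ B) ∈ Y
  ext_closed : ∀ S : ShortComplex C, S.ShortExact → S.X₁ ∈ X → S.X₃ ∈ X → S.X₂ ∈ X
  ext_orth : ∀ A ∈ X, ∀ B ∈ Y, ∀ i : ℕ, 0 < i → extZero.{w} A B i
  exists_ses : ∀ A ∈ X, ∃ (W X' : C) (f : A ⟶ W) (g : W ⟶ X') (hw : f ≫ g = 0),
    (ShortComplex.mk f g hw).ShortExact ∧ W ∈ X ∩ Y ∧ X' ∈ X

/-- `(Z,W)` is a GI-admissible pair (the dual notion). -/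
structure IsGIAdmissible (Z W : Set C) : Prop where
  exists_mono : ∀ A : C, ∃ (W₀ : C) (f : A ⟶ W₀), W₀ ∈ W ∧ Mono f
  prod_closed_left : ∀ {A B : C}, A ∈ Z → B ∈ Z → (A ⊞ B) ∈ Z
  prod_closed_right : ∀ {A B : C}, A ∈ W → B ∈ W → (A ⊞ B) ∈ W
  ext_closed : ∀ S : ShortComplex C, S.ShortExact → S.X₁ ∈ W → S.X₃ ∈ W → S.X₂ ∈ W
  ext_orth : ∀ A ∈ Z, ∀ B ∈ W, ∀ i : ℕ, 0 < i → extZero.{w} A B i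
  exists_ses : ∀ B ∈ W, ∃ (W' V : C) (f : W' ⟶ V) (g : V ⟶ B) (hw : f ≫ g = 0),
    (ShortComplex.mk f g hw).ShortExact ∧ V ∈ Z ∩ W ∧ W' ∈ W

/-- `(F,G)` is a cotorsion pair: `G = F^⊥₁` and `F = ^⊥₁G` with respect to `Ext^1`. -/
structure IsCotorsionPair (F G : Set C) : Prop where
  right_eq : G = {N | ∀ A ∈ F, extZero.{w} A N 1}
  left_eq : F = {M | ∀ B ∈ G, extZero.{w} M B 1}

/-- A cotorsion pair `(F,G)` is complete. -/
def IsCompleteCotorsionPair (F G : Set C) : Prop :=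
  IsCotorsionPair.{w} F G ∧
    (∀ A : C, ∃ (B F₀ : C) (i : B ⟶ F₀) (p : F₀ ⟶ A) (hw : i ≫ p = 0),
      (ShortComplex.mk i p hw).ShortExact ∧ F₀ ∈ F ∧ B ∈ G) ∧
    (∀ A : C, ∃ (G₀ F₀ : C) (i : A ⟶ G₀) (p : G₀ ⟶ F₀) (hw : i ≫ p = 0),
      (ShortComplex.mk i p hw).ShortExact ∧ G₀ ∈ G ∧ F₀ ∈ F)

/-- A pair `(F,G)` is hereditary: `Ext^i(F,G) = 0` for all `F ∈ F`, `G ∈ G`, `i > 0`. -/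
def IsHereditaryPair (F G : Set C) : Prop :=
  ∀ A ∈ F, ∀ B ∈ G, ∀ i : ℕ, 0 < i → extZero.{w} A B i

end Admissible

end RelativeGorenstein

open CategoryTheory CategoryTheory.Limits RelativeGorenstein

namespace GPAux

variable {C : Type u} [Category.{v} C] [Abelian C]

open HomologicalComplex

/-- In an abelian category, a map that kills the kernel factors through any
chosen "image" factorization; combined with injectivity we can extend. -/
private lemma factor_through_of_kernel_zero {A B T : C} (f : A ⟶ B) (u : A ⟶ T) [Injective T]
    (h2 : kernel.ι f ≫ u = 0) : ∃ v : B ⟶ T, f ≫ v = u := by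
  refine ⟨Injective.factorThru (cokernel.desc _ u h2) (Abelian.factorThruCoimage f), ?_⟩
  calc f ≫ Injective.factorThru (cokernel.desc _ u h2) (Abelian.factorThruCoimage f)
      = (Abelian.coimage.π f ≫ Abelian.factorThruCoimage f) ≫
          Injective.factorThru (cokernel.desc _ u h2) (Abelian.factorThruCoimage f) := by
        rw [Abelian.coimage.fac]
    _ = u := by rw [Category.assoc, Injective.comp_factorThru, cokernel.π_desc]

lemma nullHomotopic_to_single {Z : CochainComplex C ℤ} {d : ℤ} {I : C} (hI : Injective I)
    (hZ : Z.ExactAt d) (g : Z ⟶ (HomologicalComplex.single C (ComplexShape.up ℤ) d).obj I) :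
    Nonempty (Homotopy g 0) := by
  classical
  letI : Injective I := hI
  have hu : ∀ i, Z.d i d ≫ (g.f d ≫ (singleObjXSelf (ComplexShape.up ℤ) d I).hom) = 0 := by
    intro i
    rw [← Category.assoc, ← g.comm i d, single_obj_d, comp_zero, zero_comp]
  have hrel : (ComplexShape.up ℤ).Rel d (d + 1) := by simp
  have hE : ((Z.sc d)).Exact := hZ
  rw [ShortComplex.exact_iff_epi_toCycles] at hE
  have h1 : (Z.sc d).iCycles ≫ (g.f d ≫ (singleObjXSelf (ComplexShape.up ℤ) d I).hom) = 0 := by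
    rw [← cancel_epi (Z.sc d).toCycles, ShortComplex.toCycles_i_assoc, comp_zero]
    exact hu _
  have he : (IsLimit.conePointUniqueUpToIso (kernelIsKernel (Z.sc d).g)
      (Z.sc d).cyclesIsKernel).hom ≫ (Z.sc d).iCycles = kernel.ι (Z.sc d).g := by
    simpa using IsLimit.conePointUniqueUpToIso_hom_comp (kernelIsKernel (Z.sc d).g)
      (Z.sc d).cyclesIsKernel WalkingParallelPair.zero
  have h2 : kernel.ι (Z.sc d).g ≫ (g.f d ≫ (singleObjXSelf (ComplexShape.up ℤ) d I).hom) = 0 := by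
    rw [← he, Category.assoc, h1, comp_zero]
  obtain ⟨v, hv⟩ : ∃ v : Z.X ((ComplexShape.up ℤ).next d) ⟶ I,
      Z.d d ((ComplexShape.up ℤ).next d) ≫ v
        = g.f d ≫ (singleObjXSelf (ComplexShape.up ℤ) d I).hom :=
    factor_through_of_kernel_zero _ _ h2
  set h : ∀ i j, (ComplexShape.up ℤ).Rel j i →
      (Z.X i ⟶ ((HomologicalComplex.single C (ComplexShape.up ℤ) d).obj I).X j) :=
    fun i j hrel' =>
      dite (j = d)
        (fun hj => (Z.XIsoOfEq (show i = (ComplexShape.up ℤ).next d by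
            subst hj; exact ((ComplexShape.up ℤ).next_eq' hrel').symm)).hom ≫ v ≫
            (singleObjXIsoOfEq (ComplexShape.up ℤ) d I j hj).inv)
        (fun _ => 0) with hh
  have hgeq : g = Homotopy.nullHomotopicMap' h := by
    refine HomologicalComplex.to_single_hom_ext ?_
    rw [Homotopy.nullHomotopicMap'_f (show (ComplexShape.up ℤ).Rel (d-1) d by simp) hrel]
    rw [single_obj_d, comp_zero, add_zero]
    simp only [hh]
    rw [dif_pos trivial]
    rw [← Category.assoc, d_comp_XIsoOfEq_hom, ← Category.assoc, hv]
    simp [singleObjXSelf]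
  exact ⟨hgeq ▸ Homotopy.nullHomotopy' h⟩

end GPAux

namespace GPAux2
open GPAux HomologicalComplex
variable {C : Type u} [Category.{v} C] [Abelian C]

lemma nullHomotopic_from_single {Z : CochainComplex C ℤ} {d : ℤ} {P : C} (hP : Projective P)
    (hZ : Z.ExactAt d) (g : (HomologicalComplex.single C (ComplexShape.up ℤ) d).obj P ⟶ Z) :
    Nonempty (Homotopy g 0) := by
  classical
  letI : Projective P := hP
  have hrel : (ComplexShape.up ℤ).Rel d (d + 1) := by simp
  have hnext : (ComplexShape.up ℤ).next d = d + 1 := (ComplexShape.up ℤ).next_eq' hrel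
  have hu : ∀ j, ((singleObjXSelf (ComplexShape.up ℤ) d P).inv ≫ g.f d) ≫ Z.d d j = 0 := by
    intro j
    rw [Category.assoc, g.comm d j, single_obj_d, zero_comp, comp_zero]
  have hE : ((Z.sc d)).Exact := hZ
  rw [ShortComplex.exact_iff_epi_toCycles] at hE
  set u' : P ⟶ Z.cycles d :=
    Z.liftCycles ((singleObjXSelf (ComplexShape.up ℤ) d P).inv ≫ g.f d) (d+1) hnext (hu _)
    with hu'
  set b : P ⟶ Z.X ((ComplexShape.up ℤ).prev d) := @Projective.factorThru C _ P (Z.sc d).cycles _ _ u' ((Z.sc d).toCycles) hE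
    with hb
  have hbd : b ≫ Z.d ((ComplexShape.up ℤ).prev d) d
      = (singleObjXSelf (ComplexShape.up ℤ) d P).inv ≫ g.f d := by
    have : Z.d ((ComplexShape.up ℤ).prev d) d = (Z.sc d).toCycles ≫ (Z.sc d).iCycles :=
      ((Z.sc d).toCycles_i).symm
    have h1 : b ≫ (Z.sc d).toCycles = u' :=
      @Projective.factorThru_comp C _ P (Z.sc d).cycles _ _ u' ((Z.sc d).toCycles) hE
    have h2 : b ≫ (Z.sc d).toCycles ≫ (Z.sc d).iCycles = u' ≫ (Z.sc d).iCycles :=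
      (Category.assoc _ _ _).symm.trans (congrArg (· ≫ (Z.sc d).iCycles) h1)
    rw [this]
    refine h2.trans ?_
    exact Z.liftCycles_i _ _ _ _
  set h : ∀ i j, (ComplexShape.up ℤ).Rel j i →
      (((HomologicalComplex.single C (ComplexShape.up ℤ) d).obj P).X i ⟶ Z.X j) :=
    fun i j hrel' =>
      dite (i = d)
        (fun hi => (singleObjXIsoOfEq (ComplexShape.up ℤ) d P i hi).hom ≫ b ≫
          (Z.XIsoOfEq (show (ComplexShape.up ℤ).prev d = j by
            subst hi; exact (ComplexShape.up ℤ).prev_eq' hrel')).hom)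
        (fun _ => 0) with hh
  have hgeq : g = Homotopy.nullHomotopicMap' h := by
    refine HomologicalComplex.from_single_hom_ext ?_
    rw [Homotopy.nullHomotopicMap'_f (show (ComplexShape.up ℤ).Rel (d-1) d by simp) hrel]
    rw [single_obj_d, zero_comp, zero_add]
    simp only [hh]
    rw [dif_pos trivial]
    rw [Category.assoc, Category.assoc, XIsoOfEq_hom_comp_d, hbd]
    simp [singleObjXSelf]
  exact ⟨hgeq ▸ Homotopy.nullHomotopy' h⟩

end GPAux2

namespace GPAux3
open GPAux GPAux2 HomologicalComplex DerivedCategory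
universe w'
variable {C : Type u} [Category.{v} C] [Abelian C]

lemma exactAt_single_obj (d i : ℤ) (hi : i ≠ d) (A : C) :
    (((HomologicalComplex.single C (ComplexShape.up ℤ) d).obj A).ExactAt i) := by
  rw [HomologicalComplex.exactAt_iff]
  exact ShortComplex.exact_of_isZero_X₂ _ (isZero_single_obj_X (ComplexShape.up ℤ) d A i hi)

variable [HasDerivedCategory.{w'} C]

lemma hom_to_single_eq_zero {X : CochainComplex C ℤ} {d : ℤ} {I : C} (hI : Injective I)
    (hX : X.ExactAt d)
    (f : DerivedCategory.Qh.obj ((HomotopyCategory.quotient C (ComplexShape.up ℤ)).obj X) ⟶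
      DerivedCategory.Qh.obj ((HomotopyCategory.quotient C (ComplexShape.up ℤ)).obj
        ((HomologicalComplex.single C (ComplexShape.up ℤ) d).obj I))) : f = 0 := by
  have : (HomotopyCategory.quasiIso C (ComplexShape.up ℤ)).HasRightCalculusOfFractions := by
    rw [HomotopyCategory.quasiIso_eq_subcategoryAcyclic_W]; infer_instance
  obtain ⟨φ, hφ⟩ := Localization.exists_rightFraction DerivedCategory.Qh
    (HomotopyCategory.quasiIso C (ComplexShape.up ℤ)) f
  obtain ⟨X', s, hs, f', rfl⟩ := φ.cases
  obtain ⟨g, rfl⟩ : ∃ g : X'.as ⟶ (HomologicalComplex.single C (ComplexShape.up ℤ) d).obj I,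
      (HomotopyCategory.quotient C (ComplexShape.up ℤ)).map g = f' :=
    (HomotopyCategory.quotient C (ComplexShape.up ℤ)).map_surjective f'
  -- `X'.as` is exact at `d`
  have hIso : IsIso ((HomotopyCategory.homologyFunctor C (ComplexShape.up ℤ) d).map s) := hs d
  have hZX : IsZero ((HomotopyCategory.homologyFunctor C (ComplexShape.up ℤ) d).obj
      ((HomotopyCategory.quotient C (ComplexShape.up ℤ)).obj X)) := by
    refine IsZero.of_iso ?_ ((HomotopyCategory.homologyFunctorFactors C (ComplexShape.up ℤ) d).app X)
    have hX' := hX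
    rw [HomologicalComplex.exactAt_iff_isZero_homology] at hX'
    exact hX'
  have hZ' : IsZero ((HomotopyCategory.homologyFunctor C (ComplexShape.up ℤ) d).obj X') :=
    IsZero.of_iso hZX (asIso ((HomotopyCategory.homologyFunctor C (ComplexShape.up ℤ) d).map s))
  have hex : X'.as.ExactAt d := by
    rw [HomologicalComplex.exactAt_iff_isZero_homology]
    exact IsZero.of_iso hZ'
      (((HomotopyCategory.homologyFunctorFactors C (ComplexShape.up ℤ) d).app X'.as).symm)
  obtain ⟨H⟩ := nullHomotopic_to_single hI hex g
  have hg0 : (HomotopyCategory.quotient C (ComplexShape.up ℤ)).map g = 0 := by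
    rw [HomotopyCategory.eq_of_homotopy _ _ H, Functor.map_zero]
  rw [hφ]
  simp [MorphismProperty.RightFraction.map, hg0]
  exact Functor.map_zero _ _ _

lemma hom_from_single_eq_zero {X : CochainComplex C ℤ} {d : ℤ} {P : C} (hP : Projective P)
    (hX : X.ExactAt d)
    (f : DerivedCategory.Qh.obj ((HomotopyCategory.quotient C (ComplexShape.up ℤ)).obj
        ((HomologicalComplex.single C (ComplexShape.up ℤ) d).obj P)) ⟶
      DerivedCategory.Qh.obj ((HomotopyCategory.quotient C (ComplexShape.up ℤ)).obj X)) :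
    f = 0 := by
  have : (HomotopyCategory.quasiIso C (ComplexShape.up ℤ)).HasLeftCalculusOfFractions := by
    rw [HomotopyCategory.quasiIso_eq_subcategoryAcyclic_W]; infer_instance
  obtain ⟨φ, hφ⟩ := Localization.exists_leftFraction DerivedCategory.Qh
    (HomotopyCategory.quasiIso C (ComplexShape.up ℤ)) f
  obtain ⟨Y', f', s, hs, rfl⟩ := φ.cases
  obtain ⟨g, rfl⟩ : ∃ g : (HomologicalComplex.single C (ComplexShape.up ℤ) d).obj P ⟶ Y'.as,
      (HomotopyCategory.quotient C (ComplexShape.up ℤ)).map g = f' :=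
    (HomotopyCategory.quotient C (ComplexShape.up ℤ)).map_surjective f'
  have hIso : IsIso ((HomotopyCategory.homologyFunctor C (ComplexShape.up ℤ) d).map s) := hs d
  have hZX : IsZero ((HomotopyCategory.homologyFunctor C (ComplexShape.up ℤ) d).obj
      ((HomotopyCategory.quotient C (ComplexShape.up ℤ)).obj X)) := by
    refine IsZero.of_iso ?_ ((HomotopyCategory.homologyFunctorFactors C (ComplexShape.up ℤ) d).app X)
    have hX' := hX
    rw [HomologicalComplex.exactAt_iff_isZero_homology] at hX'
    exact hX'
  have hZ' : IsZero ((HomotopyCategory.homologyFunctor C (ComplexShape.up ℤ) d).obj Y') :=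
    IsZero.of_iso hZX (asIso ((HomotopyCategory.homologyFunctor C (ComplexShape.up ℤ) d).map s)).symm
  have hex : Y'.as.ExactAt d := by
    rw [HomologicalComplex.exactAt_iff_isZero_homology]
    exact IsZero.of_iso hZ'
      ((HomotopyCategory.homologyFunctorFactors C (ComplexShape.up ℤ) d).app Y'.as).symm
  obtain ⟨H⟩ := nullHomotopic_from_single hP hex g
  have hg0 : (HomotopyCategory.quotient C (ComplexShape.up ℤ)).map g = 0 := by
    rw [HomotopyCategory.eq_of_homotopy _ _ H, Functor.map_zero]
  rw [hφ]
  simp [MorphismProperty.LeftFraction.map, hg0]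
  exact Functor.map_zero _ _ _

end GPAux3

namespace GPAux4
open GPAux3 HomologicalComplex DerivedCategory CategoryTheory.Abelian
variable {C : Type u} [Category.{v} C] [Abelian C] [HasExt.{w} C]

lemma ext_subsingleton_of_injective {I : C} (hI : Injective I) (M : C) {n : ℕ} (hn : 0 < n) :
    Subsingleton (Ext.{w} M I n) := by
  letI := HasDerivedCategory.standard C
  suffices h : ∀ x : Ext.{w} M I n, x = 0 from ⟨fun a b => (h a).trans (h b).symm⟩
  intro x
  apply Ext.homAddEquiv.injective
  rw [map_zero, Ext.homAddEquiv_apply]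
  have e := ((DerivedCategory.singleFunctors C).shiftIso (n : ℤ) (-(n : ℤ)) 0 (by omega)).app I
  have h0 : (x.hom ≫ e.hom) = 0 :=
    hom_to_single_eq_zero hI (exactAt_single_obj 0 (-(n : ℤ)) (by omega) M) (x.hom ≫ e.hom)
  calc (x.hom : _ ⟶ _) = (x.hom ≫ e.hom) ≫ e.inv := by
        rw [Category.assoc, e.hom_inv_id]; simp
    _ = 0 := by rw [h0, Limits.zero_comp]

lemma ext_subsingleton_of_projective {P : C} (hP : Projective P) (Y : C) {n : ℕ} (hn : 0 < n) :
    Subsingleton (Ext.{w} P Y n) := by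
  letI := HasDerivedCategory.standard C
  suffices h : ∀ x : Ext.{w} P Y n, x = 0 from ⟨fun a b => (h a).trans (h b).symm⟩
  intro x
  apply Ext.homAddEquiv.injective
  rw [map_zero, Ext.homAddEquiv_apply]
  have e := ((DerivedCategory.singleFunctors C).shiftIso (n : ℤ) (-(n : ℤ)) 0 (by omega)).app Y
  have h0 : (x.hom ≫ e.hom) = 0 :=
    hom_from_single_eq_zero hP (exactAt_single_obj (-(n : ℤ)) 0 (by omega) Y) (x.hom ≫ e.hom)
  calc (x.hom : _ ⟶ _) = (x.hom ≫ e.hom) ≫ e.inv := by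
        rw [Category.assoc, e.hom_inv_id]; simp
    _ = 0 := by rw [h0, Limits.zero_comp]

end GPAux4


namespace GPMain

open CategoryTheory CategoryTheory.Limits CategoryTheory.Abelian RelativeGorenstein
open GPAux GPAux2 GPAux3 GPAux4 HomologicalComplex

variable {C : Type u} [Category.{v} C] [Abelian C] [HasExt.{w} C]

lemma extZero_of_iso {M M' N : C} (e : M ≅ M') {i : ℕ} (h : extZero.{w} M' N i) :
    extZero.{w} M N i := by
  suffices h' : ∀ x : Ext.{w} M N i, x = 0 from ⟨fun a b => (h' a).trans (h' b).symm⟩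
  intro x
  have hz : (Ext.mk₀ e.inv).comp x (zero_add i) = 0 := @Subsingleton.elim _ h _ _
  calc x = (Ext.mk₀ e.hom).comp ((Ext.mk₀ e.inv).comp x (zero_add i)) (zero_add i) := by
        rw [Ext.mk₀_comp_mk₀_assoc, Iso.hom_inv_id, Ext.mk₀_id_comp]
    _ = 0 := by rw [hz, Ext.comp_zero]

lemma extZero_of_ses_right {S : ShortComplex C} (hS : S.ShortExact) (M : C) {n : ℕ}
    (h3 : extZero.{w} M S.X₃ n) (h2 : extZero.{w} M S.X₂ (n + 1)) :
    extZero.{w} M S.X₁ (n + 1) := by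
  suffices h : ∀ x : Ext.{w} M S.X₁ (n + 1), x = 0 from ⟨fun a b => (h a).trans (h b).symm⟩
  intro x
  have hx : x.comp (Ext.mk₀ S.f) (add_zero _) = 0 := @Subsingleton.elim _ h2 _ _
  obtain ⟨x₃, hx₃⟩ := Ext.covariant_sequence_exact₁ M hS x hx rfl
  rw [← hx₃, @Subsingleton.elim _ h3 x₃ 0, Ext.zero_comp]

lemma extZero_of_ses_left {S : ShortComplex C} (hS : S.ShortExact) (B : C) {n : ℕ}
    (h2 : extZero.{w} S.X₂ B n) (h3 : extZero.{w} S.X₃ B (n + 1)) :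
    extZero.{w} S.X₁ B n := by
  suffices h : ∀ x : Ext.{w} S.X₁ B n, x = 0 from ⟨fun a b => (h a).trans (h b).symm⟩
  intro x
  have hx : hS.extClass.comp x (show 1 + n = n + 1 by omega) = 0 := @Subsingleton.elim _ h3 _ _
  obtain ⟨x₂, hx₂⟩ := Ext.contravariant_sequence_exact₁ hS B x (show 1 + n = n + 1 by omega) hx
  rw [← hx₂, @Subsingleton.elim _ h2 x₂ 0, Ext.comp_zero]

lemma vanish_of_injVee : ∀ (n : ℕ) (N : C), CoresDimLE (injClass C) n N →
    ∀ (M : C) (i : ℕ), n < i → extZero.{w} M N i := by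
  intro n
  induction n with
  | zero =>
    intro N hN M i hi
    exact ext_subsingleton_of_injective hN M hi
  | succ n ih =>
    intro N hN M i hi
    rcases hN with h | ⟨I, K, f, p, w, hse, hI, hK⟩
    · exact ext_subsingleton_of_injective h M (by omega)
    · obtain ⟨i', rfl⟩ : ∃ i', i = i' + 1 := ⟨i - 1, by omega⟩
      exact extZero_of_ses_right hse M (ih K hK M i' (by omega))
        (ext_subsingleton_of_injective hI M (by omega))

lemma vanish_X {X Y : Set C} (hXY : IsGPAdmissible.{w} X Y) (hcap : X ∩ Y = projClass C)
    {N : C} {n : ℕ} (hN : CoresDimLE (injClass C) n N) :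
    ∀ (m : ℕ) (A : C), A ∈ X → ∀ i : ℕ, 0 < i → n < i + m → extZero.{w} A N i := by
  intro m
  induction m with
  | zero => intro A _ i _ hni; exact vanish_of_injVee n N hN A i (by omega)
  | succ m ih =>
    intro A hA i hi hni
    by_cases h : n < i + m
    · exact ih A hA i hi h
    · obtain ⟨W', X', f, g, w, hse, hW, hX'⟩ := hXY.exists_ses A hA
      have hproj : Projective W' := by
        have hmem : W' ∈ projClass C := hcap ▸ hW
        exact hmem
      exact extZero_of_ses_left hse N (ext_subsingleton_of_projective hproj N hi)
        (ih X' hX' (i + 1) (by omega) (by omega))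

lemma cycles_ses (K : CochainComplex C ℤ) (j : ℤ) (hK : K.ExactAt (j + 1)) :
    (ShortComplex.mk (K.iCycles j) (K.toCycles j (j + 1))
      (by rw [← cancel_mono (K.iCycles (j + 1)), Category.assoc, K.toCycles_i,
        iCycles_d, Limits.zero_comp])).ShortExact := by
  have hp : (ComplexShape.up ℤ).prev (j + 1) = j := (ComplexShape.up ℤ).prev_eq' (by simp)
  have hE : Epi ((K.sc (j + 1)).toCycles) := by
    rw [← ShortComplex.exact_iff_epi_toCycles]
    exact hK
  have hE' : (K.sc' j (j + 1) (j + 1 + 1)).Exact :=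
    (K.exactAt_iff' j (j + 1) (j + 1 + 1) hp (by simp)).1 hK
  rw [ShortComplex.exact_iff_epi_toCycles] at hE'
  have hepi : Epi (K.toCycles j (j + 1)) := by
    have h := K.toCycles_cyclesIsoSc'_hom j (j + 1) (j + 1 + 1) hp (by simp)
    have h3 : K.toCycles j (j + 1) = (K.sc' j (j + 1) (j + 1 + 1)).toCycles ≫
        (K.cyclesIsoSc' j (j + 1) (j + 1 + 1) hp (by simp)).inv :=
      (Iso.eq_comp_inv _).2 h
    rw [h3]
    exact @epi_comp C _ _ _ _ _ hE' _ inferInstance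
  refine ⟨?_⟩
  · refine ShortComplex.exact_of_f_is_kernel _ ?_
    refine KernelFork.IsLimit.ofι _ _
      (fun {A} k hk => K.liftCycles k (j + 1) ((ComplexShape.up ℤ).next_eq' (by simp)) ?_)
      (fun {A} k hk => K.liftCycles_i _ _ _ _) ?_
    · simpa using congrArg (fun t => t ≫ K.iCycles (j + 1)) hk
    · intro A k hk m hm
      rw [← cancel_mono (K.iCycles j), hm, K.liftCycles_i]

lemma vanish_cycles {X Y : Set C} (hXY : IsGPAdmissible.{w} X Y) (hcap : X ∩ Y = projClass C)
    {N : C} {n : ℕ} (hN : CoresDimLE (injClass C) n N)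
    (P : CochainComplex C ℤ) (hPX : ∀ k, P.X k ∈ X) (hac : RelativeGorenstein.Acyclic P) :
    ∀ (m : ℕ) (j : ℤ) (i : ℕ), 0 < i → n < i + m → extZero.{w} (P.cycles j) N i := by
  intro m
  induction m with
  | zero => intro j i _ hni; exact vanish_of_injVee n N hN _ i (by omega)
  | succ m ih =>
    intro j i hi hni
    by_cases h : n < i + m
    · exact ih j i hi h
    · exact extZero_of_ses_left (cycles_ses P j (hac (j + 1))) N
        (vanish_X hXY hcap hN (n + 1) (P.X j) (hPX j) i hi (by omega))
        (ih (j + 1) (i + 1) (by omega) (by omega))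

end GPMain


/-- If `(X,Y)` is GP-admissible with `X ∩ Y = Proj(A)` and `(Z,W)` is
GI-admissible with `Z ∩ W = Inj(A)`, then `Ext^i(G, N) = 0` for every `G ∈ GP_(X,Y)`,
every `N` of finite injective coresolution dimension and every `i > 0`. -/
theorem gp_perp_injVeeFin
    {C : Type u} [Category.{v} C] [Abelian C] [HasExt.{w} C]
    (X Y Z W : Set C) (hXY : IsGPAdmissible.{w} X Y) (hcapXY : X ∩ Y = projClass C)
    (hZW : IsGIAdmissible.{w} Z W) (hcapZW : Z ∩ W = injClass C) :
    ∀ G ∈ gpClass X Y, ∀ N ∈ injVeeFin C, ∀ i : ℕ, 0 < i → extZero.{w} G N i := by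
  intro G hG N hN i hi
  obtain ⟨P, j, hPX, hac, _, ⟨e⟩⟩ := hG
  obtain ⟨n, hNc⟩ := hN
  exact GPMain.extZero_of_iso e
    (GPMain.vanish_cycles hXY hcapXY hNc P hPX hac (n + 1) j i hi (by omega))
end

section
/- Let A be an abelian category, (X,Y) a GP-admissible pair in A with X ∩ Y = Proj(A), and (Z,W) a GI-admissible pair in A with Z ∩ W = Inj(A). If (GP_{(X,Y)}, Inj(A)^∨_n) is a complete cotorsion pair in A, then gl.GPD_{(X,Y)}(A) ≤ n, i.e. every object of A has (X,Y)-Gorenstein projective dimension at most n. -/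
open CategoryTheory CategoryTheory.Limits

universe w v u

open CategoryTheory CategoryTheory.Limits RelativeGorenstein

namespace RelGorAux

open CategoryTheory CategoryTheory.Limits CategoryTheory.Abelian RelativeGorenstein

variable {C : Type u} [Category.{v} C] [Abelian C]

/-- Any chain map to a single complex, concentrated in a degree at which the source
complex is exact, with injective target, is null-homotopic. -/
noncomputable def homotopyToSingle {K : CochainComplex C ℤ} {m : ℤ} {I : C}
    [Injective I] (hK : K.ExactAt m)
    (g : K ⟶ (HomologicalComplex.single C (ComplexShape.up ℤ) m).obj I) :
    Homotopy g 0 := by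
  have hTd : ∀ a b : ℤ,
      ((HomologicalComplex.single C (ComplexShape.up ℤ) m).obj I).d a b = 0 := fun _ _ => rfl
  have hS : (K.sc' (m-1) m (m+1)).Exact :=
    (K.exactAt_iff' (m-1) m (m+1) (CochainComplex.prev ℤ m) (CochainComplex.next ℤ m)).1 hK
  have hf : K.d (m-1) m ≫
      (g.f m ≫ (HomologicalComplex.singleObjXSelf (ComplexShape.up ℤ) m I).hom) = 0 := by
    rw [← Category.assoc, ← g.comm (m-1) m, hTd, comp_zero, zero_comp]
  set s : K.X (m+1) ⟶ I := hS.descToInjective _ hf with hsdef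
  have hs : K.d m (m+1) ≫ s =
      g.f m ≫ (HomologicalComplex.singleObjXSelf (ComplexShape.up ℤ) m I).hom :=
    hS.comp_descToInjective _ hf
  let homf : ∀ i j : ℤ,
      K.X i ⟶ ((HomologicalComplex.single C (ComplexShape.up ℤ) m).obj I).X j := fun i j =>
    if h : i = m + 1 ∧ j = m then
      eqToHom (congrArg K.X h.1) ≫ s ≫
        (HomologicalComplex.singleObjXSelf (ComplexShape.up ℤ) m I).inv ≫
        eqToHom (congrArg ((HomologicalComplex.single C (ComplexShape.up ℤ) m).obj I).X h.2.symm)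
    else 0
  have homf_self : homf (m+1) m =
      s ≫ (HomologicalComplex.singleObjXSelf (ComplexShape.up ℤ) m I).inv := by
    simp only [homf, dif_pos (⟨rfl, rfl⟩ : m + 1 = m + 1 ∧ m = m), eqToHom_refl,
      Category.id_comp, Category.comp_id]
  have homf_ne : ∀ i j : ℤ, ¬ (i = m + 1 ∧ j = m) → homf i j = 0 := fun i j h => dif_neg h
  have hprevD : ∀ i, prevD i homf = 0 := fun i => by
    have h : prevD i homf =
        homf i ((ComplexShape.up ℤ).prev i) ≫
          ((HomologicalComplex.single C (ComplexShape.up ℤ) m).obj I).d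
            ((ComplexShape.up ℤ).prev i) i := rfl
    rw [h, hTd, comp_zero]
  refine ⟨homf, ?_, ?_⟩
  · intro i j hij
    refine homf_ne i j ?_
    rintro ⟨rfl, rfl⟩
    exact hij (by simp)
  · intro i
    by_cases hi : i = m
    · subst hi
      rw [dNext_eq homf (show (ComplexShape.up ℤ).Rel i (i+1) by simp), hprevD, homf_self]
      have h2 : K.d i (i+1) ≫ s ≫ (HomologicalComplex.singleObjXSelf (ComplexShape.up ℤ) i I).inv
          = g.f i := by
        rw [← Category.assoc, hs, Category.assoc, Iso.hom_inv_id, Category.comp_id]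
      rw [h2]
      simp
    · rw [dNext_eq homf (show (ComplexShape.up ℤ).Rel i (i+1) by simp),
        homf_ne (i+1) i (fun h => hi h.2), comp_zero, hprevD]
      have h3 : g.f i = 0 :=
        (HomologicalComplex.isZero_single_obj_X (ComplexShape.up ℤ) m I i hi).eq_of_tgt _ _
      rw [h3]
      simp

/-- In any abelian category, `Ext^k (A, I)` vanishes for `k ≥ 1` when `I` is injective. -/
lemma subsingleton_ext_of_injective [HasExt.{w} C] (A : C) {I : C} (hI : Injective I)
    {k : ℕ} (hk : 0 < k) : Subsingleton (Abelian.Ext.{w} A I k) := by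
  haveI := hI
  letI := HasDerivedCategory.standard C
  suffices h : ∀ x : Abelian.Ext.{w} A I k, x = 0 from ⟨fun a b => by rw [h a, h b]⟩
  intro x
  have hm : (k : ℤ) + (-(k : ℤ)) = 0 := by omega
  have e := ((DerivedCategory.singleFunctors C).shiftIso (k : ℤ) (-(k : ℤ)) 0 hm).app I
  have key : x.hom ≫ e.hom = 0 := by
    have hy : ∀ y : DerivedCategory.Qh.obj ((HomotopyCategory.quotient C (ComplexShape.up ℤ)).obj
          ((HomologicalComplex.single C (ComplexShape.up ℤ) (0 : ℤ)).obj A)) ⟶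
        DerivedCategory.Qh.obj ((HomotopyCategory.quotient C (ComplexShape.up ℤ)).obj
          ((HomologicalComplex.single C (ComplexShape.up ℤ) (-(k : ℤ))).obj I)), y = 0 := by
      intro y
      obtain ⟨φ, hφ⟩ := Localization.exists_rightFraction DerivedCategory.Qh
        (HomotopyCategory.subcategoryAcyclic C).trW y
      have hqs : HomotopyCategory.quasiIso C (ComplexShape.up ℤ) φ.s := by
        rw [HomotopyCategory.quasiIso_eq_trW_subcategoryAcyclic]; exact φ.hs
      have hKex : (φ.X'.as : CochainComplex C ℤ).ExactAt (-(k : ℤ)) := by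
        rw [HomologicalComplex.exactAt_iff_isZero_homology]
        have h1 : IsIso ((HomotopyCategory.homologyFunctor C (ComplexShape.up ℤ)
            (-(k : ℤ))).map φ.s) := hqs _
        have h2 : IsZero ((HomotopyCategory.homologyFunctor C (ComplexShape.up ℤ)
            (-(k : ℤ))).obj ((HomotopyCategory.quotient C (ComplexShape.up ℤ)).obj
              ((HomologicalComplex.single C (ComplexShape.up ℤ) (0 : ℤ)).obj A))) := by
          refine IsZero.of_iso ?_ ((HomotopyCategory.homologyFunctorFactors C
            (ComplexShape.up ℤ) (-(k : ℤ))).app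
            ((HomologicalComplex.single C (ComplexShape.up ℤ) (0 : ℤ)).obj A))
          exact HomologicalComplex.isZero_single_obj_homology (ComplexShape.up ℤ) (0 : ℤ) A _
            (by omega)
        have h3 : IsZero ((HomotopyCategory.homologyFunctor C (ComplexShape.up ℤ)
            (-(k : ℤ))).obj φ.X') :=
          IsZero.of_iso h2 (asIso ((HomotopyCategory.homologyFunctor C (ComplexShape.up ℤ)
            (-(k : ℤ))).map φ.s))
        exact IsZero.of_iso h3 ((HomotopyCategory.homologyFunctorFactors C
          (ComplexShape.up ℤ) (-(k : ℤ))).app φ.X'.as).symm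
      obtain ⟨g, hg⟩ := (HomotopyCategory.quotient C (ComplexShape.up ℤ)).map_surjective
        (show (HomotopyCategory.quotient C (ComplexShape.up ℤ)).obj φ.X'.as ⟶
            (HomotopyCategory.quotient C (ComplexShape.up ℤ)).obj
              ((HomologicalComplex.single C (ComplexShape.up ℤ) (-(k : ℤ))).obj I) from φ.f)
      have hg' : (HomotopyCategory.quotient C (ComplexShape.up ℤ)).map g = φ.f := hg
      have hg0 : φ.f = 0 := by
        rw [← hg', HomotopyCategory.eq_of_homotopy g 0 (homotopyToSingle hKex g),
          Functor.map_zero]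
        rfl
      haveI : IsIso (DerivedCategory.Qh.map φ.s) :=
        Localization.inverts DerivedCategory.Qh (HomotopyCategory.subcategoryAcyclic C).trW φ.s φ.hs
      rw [hφ, ← cancel_epi (DerivedCategory.Qh.map φ.s), comp_zero,
        MorphismProperty.RightFraction.map_s_comp_map, hg0, Functor.map_zero]
    exact hy (x.hom ≫ e.hom)
  have hx : x.hom = 0 := by
    calc x.hom = (x.hom ≫ e.hom) ≫ e.inv := by simp
    _ = 0 := by rw [key, zero_comp]
  refine Abelian.Ext.ext ?_
  rw [hx, Abelian.Ext.zero_hom]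

variable [HasExt.{w} C]

lemma subsingleton_of_contra {S : ShortComplex C} (hS : S.ShortExact) (V : C) (n₀ : ℕ)
    (h₂ : Subsingleton (Abelian.Ext.{w} S.X₂ V n₀))
    (h₃ : Subsingleton (Abelian.Ext.{w} S.X₃ V (1 + n₀))) :
    Subsingleton (Abelian.Ext.{w} S.X₁ V n₀) := by
  suffices h : ∀ x : Abelian.Ext.{w} S.X₁ V n₀, x = 0 from ⟨fun a b => by rw [h a, h b]⟩
  intro x
  obtain ⟨x₂, hx₂⟩ := Abelian.Ext.contravariant_sequence_exact₁ hS V x rfl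
    (@Subsingleton.elim _ h₃ _ _)
  rw [← hx₂, @Subsingleton.elim _ h₂ x₂ 0]
  simp

lemma subsingleton_of_cov (A : C) {S : ShortComplex C} (hS : S.ShortExact) (n₀ : ℕ)
    (h₃ : Subsingleton (Abelian.Ext.{w} A S.X₃ n₀))
    (h₂ : Subsingleton (Abelian.Ext.{w} A S.X₂ (n₀ + 1))) :
    Subsingleton (Abelian.Ext.{w} A S.X₁ (n₀ + 1)) := by
  suffices h : ∀ x : Abelian.Ext.{w} A S.X₁ (n₀ + 1), x = 0 from ⟨fun a b => by rw [h a, h b]⟩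
  intro x
  obtain ⟨x₃, hx₃⟩ :=
    Abelian.Ext.covariant_sequence_exact₁ A hS x (@Subsingleton.elim _ h₂ _ _) rfl
  rw [← hx₃, @Subsingleton.elim _ h₃ x₃ 0]
  simp

lemma coresDimLE_succ_iff {G : Set C} {m : ℕ} {M : C} :
    CoresDimLE G (m+1) M ↔ (M ∈ G ∨ ∃ (G₀ K : C) (i : M ⟶ G₀) (p : G₀ ⟶ K) (w : i ≫ p = 0),
      (ShortComplex.mk i p w).ShortExact ∧ G₀ ∈ G ∧ CoresDimLE G m K) := Iff.rfl

lemma coresDimLE_mono : ∀ {m : ℕ} {M : C},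
    CoresDimLE (injClass C) m M → CoresDimLE (injClass C) (m+1) M := by
  intro m
  induction m with
  | zero => intro M h; exact Or.inl h
  | succ m ih =>
    intro M h
    rcases coresDimLE_succ_iff.1 h with h | ⟨G₀, K, i, p, w, hse, hG, hK⟩
    · exact Or.inl h
    · exact Or.inr ⟨G₀, K, i, p, w, hse, hG, ih hK⟩

lemma injVee_cases {n : ℕ} {V : C} (hV : CoresDimLE (injClass C) n V) :
    Injective V ∨ ∃ (G₀ K : C) (i : V ⟶ G₀) (p : G₀ ⟶ K) (w : i ≫ p = 0),
      (ShortComplex.mk i p w).ShortExact ∧ Injective G₀ ∧ CoresDimLE (injClass C) n K := by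
  cases n with
  | zero => exact Or.inl hV
  | succ m =>
    rcases coresDimLE_succ_iff.1 hV with h | ⟨G₀, K, i, p, w, hse, hG, hK⟩
    · exact Or.inl h
    · exact Or.inr ⟨G₀, K, i, p, w, hse, hG, coresDimLE_mono hK⟩

lemma vanish_of_coresDim : ∀ (m : ℕ) (V : C), CoresDimLE (injClass C) m V →
    ∀ (A : C) (j : ℕ), m < j → Subsingleton (Abelian.Ext.{w} A V j) := by
  intro m
  induction m with
  | zero => intro V hV A j hj; exact subsingleton_ext_of_injective A hV hj
  | succ m ih =>
    intro V hV A j hj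
    rcases coresDimLE_succ_iff.1 hV with h | ⟨G₀, K, i, p, w, hse, hG, hK⟩
    · exact subsingleton_ext_of_injective A h (by omega)
    · obtain ⟨j, rfl⟩ : ∃ j', j = j' + 1 := ⟨j - 1, by omega⟩
      exact subsingleton_of_cov A hse j (ih K hK A j (by omega))
        (subsingleton_ext_of_injective A hG (by omega))

lemma hered {X Y : Set C} {n : ℕ}
    (hcp : IsCompleteCotorsionPair.{w} (gpClass X Y) (injVee C n)) :
    ∀ (j : ℕ), 0 < j → ∀ G ∈ gpClass X Y, ∀ V ∈ injVee C n,
      Subsingleton (Abelian.Ext.{w} G V j) := by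
  intro j
  induction j with
  | zero => intro h; exact absurd h (lt_irrefl 0)
  | succ j ih =>
    intro _ G hG V hV
    rcases Nat.eq_zero_or_pos j with rfl | hj
    · have hV' := hV
      rw [hcp.1.right_eq] at hV'
      exact hV' G hG
    · rcases injVee_cases (hV : CoresDimLE (injClass C) n V) with
        hVi | ⟨G₀, K, i, p, w, hse, hG₀, hK⟩
      · exact subsingleton_ext_of_injective G hVi (by omega)
      · exact subsingleton_of_cov G hse j (ih hj G hG K hK)
          (subsingleton_ext_of_injective G hG₀ (by omega))

lemma resDimLE_of_vanish {X Y : Set C} {n : ℕ}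
    (hcp : IsCompleteCotorsionPair.{w} (gpClass X Y) (injVee C n)) :
    ∀ (k : ℕ) (A : C),
      (∀ V ∈ injVee C n, ∀ j : ℕ, k < j → Subsingleton (Abelian.Ext.{w} A V j)) →
      ResDimLE (gpClass X Y) k A := by
  intro k
  induction k with
  | zero =>
    intro A hA
    show A ∈ gpClass X Y
    rw [hcp.1.left_eq]
    intro V hV
    exact hA V hV 1 one_pos
  | succ k ih =>
    intro A hA
    obtain ⟨B, F₀, i, p, hw, hse, hF, hB⟩ := hcp.2.1 A
    exact Or.inr ⟨B, F₀, i, p, hw, hse, hF, ih B fun V hV j hj =>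
      subsingleton_of_contra hse V j (hered hcp j (by omega) F₀ hF V hV)
        (hA V hV (1 + j) (by omega))⟩

end RelGorAux


/-- If `(X,Y)` is GP-admissible with `X ∩ Y = Proj(A)`, `(Z,W)` is
GI-admissible with `Z ∩ W = Inj(A)` and `(GP_(X,Y), Inj(A)^∨_n)` is a complete cotorsion
pair, then `gl.GPD_(X,Y)(A) ≤ n`. -/
theorem glGPD_le_of_completeCotorsionPair
    {C : Type u} [Category.{v} C] [Abelian C] [HasExt.{w} C]
    (X Y Z W : Set C) (hXY : IsGPAdmissible.{w} X Y) (hcapXY : X ∩ Y = projClass C)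
    (hZW : IsGIAdmissible.{w} Z W) (hcapZW : Z ∩ W = injClass C) (n : ℕ)
    (hcp : IsCompleteCotorsionPair.{w} (gpClass X Y) (injVee C n)) :
    glGPD C X Y ≤ (n : ℕ∞) := by
  refine iSup_le fun M => ?_
  refine sInf_le ⟨n, rfl, RelGorAux.resDimLE_of_vanish hcp n M fun V hV j hj =>
    RelGorAux.vanish_of_coresDim n V hV M j hj⟩
end
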